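/- Let (V,d) be a metric space and S, X nonempty finite subsets of V. Define Proj(S, X) := {π_X(y) : y ∈ S}, the projection of S onto X. Then for every y ∈ V, d(y, Proj(S, X)) ≤ d(y, X) + 2·d(y, S). -/
import Mathlib


/-- Projection of a set: for `Proj(S,X) := {π_X(y) : y ∈ S}`, every point `y` satisfies
`d(y, Proj(S,X)) ≤ d(y, X) + 2·d(y, S)`. -/
theorem stmt1 {V : Type*} [MetricSpace V] [DecidableEq V] (S X : Finset V)
    (hS : S.Nonempty) (hX : X.Nonempty)
    (πX : V → V)
    (hπX : ∀ y : V, πX y ∈ X ∧ dist y (πX y) = Metric.infDist y (X : Set V))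
    (y : V) :
    Metric.infDist y ((S.image πX : Finset V) : Set V)
      ≤ Metric.infDist y (X : Set V) + 2 * Metric.infDist y (S : Set V) := by
  obtain ⟨s, hsS, hsd⟩ := S.finite_toSet.isCompact.exists_infDist_eq_dist
    (by exact_mod_cast hS) y
  have h1 : Metric.infDist y ((S.image πX : Finset V) : Set V) ≤ dist y (πX s) :=
    Metric.infDist_le_dist_of_mem (by simp; exact ⟨s, hsS, rfl⟩)
  have h2 : dist s (πX s) ≤ dist s y + Metric.infDist y (X : Set V) := by
    rw [(hπX s).2]
    calc Metric.infDist s (X : Set V) ≤ dist s (πX y) :=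
          Metric.infDist_le_dist_of_mem (hπX y).1
      _ ≤ dist s y + dist y (πX y) := dist_triangle _ _ _
      _ = dist s y + Metric.infDist y (X : Set V) := by rw [(hπX y).2]
  calc Metric.infDist y ((S.image πX : Finset V) : Set V) ≤ dist y (πX s) := h1
    _ ≤ dist y s + dist s (πX s) := dist_triangle _ _ _
    _ ≤ dist y s + (dist s y + Metric.infDist y (X : Set V)) := by linarith
    _ = Metric.infDist y (X : Set V) + 2 * Metric.infDist y (S : Set V) := by
        rw [hsd, dist_comm s y]; ring
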